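/- Fix an integer r ≥ 1, a nonzero complex number ħ, and a complex number x such that x/ħ + 1/2 is not a nonpositive real number (so all Gamma values below are nonzero); for real t and real q define Φ(t,q) := Σ_{d=0}^∞ q^{rd} e^{tħrd} Φ^d(x). Then Φ is differentiable in t and in q, and satisfies the evolution equation ∂Φ/∂t (t,q) = ħ · q · ∂Φ/∂q (t,q) for all real t and q. -/

import Mathlib

/-- The term `Φ^d(x)` of the wave function for the orbifold Gromov-Witten theory of `ℙ[r]`. -/
noncomputable def PhiD (r : ℕ) (hbar : ℂ) (d : ℕ) (x : ℂ) : ℂ :=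
  (Real.sqrt (2 * Real.pi) : ℂ) * ((-1 : ℂ) ^ d / ((r : ℂ) ^ d * (d.factorial : ℂ))) *
    hbar ^ (-(x / hbar) - ((r : ℂ) + 1) * (d : ℂ)) /
      Complex.Gamma (x / hbar + (r : ℂ) * (d : ℂ) + 1 / 2)

open Complex Finset

lemma aux_gamma_shift (z : ℂ) (hz : ∀ n : ℕ, z + n ≠ 0) (k : ℕ) :
    Complex.Gamma (z + k) = (∏ j ∈ Finset.range k, (z + j)) * Complex.Gamma z := by
  induction k with
  | zero => simp
  | succ k ih =>
      have h1 : z + (k + 1 : ℕ) = (z + k) + 1 := by push_cast; ring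
      rw [h1, Complex.Gamma_add_one _ (hz k), ih, Finset.prod_range_succ]
      ring

lemma aux_invGamma_bound (r : ℕ) (hr : 1 ≤ r) (w : ℂ)
    (hw : ∀ s : ℝ, s ≤ 0 → w ≠ (s : ℂ)) :
    ∃ M : ℝ, 0 ≤ M ∧ ∀ d : ℕ, ‖(Complex.Gamma (w + ((r * d : ℕ) : ℂ)))⁻¹‖ ≤ M := by
  have hzn : ∀ n : ℕ, w + (n : ℂ) ≠ 0 := by
    intro n h
    exact hw (-(n : ℝ)) (neg_nonpos.mpr n.cast_nonneg)
      (by push_cast; linear_combination h)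
  -- each `w + n` has norm ≥ n - ‖w‖
  have hnorm : ∀ n : ℕ, (n : ℝ) - ‖w‖ ≤ ‖w + (n : ℂ)‖ := by
    intro n
    have : ‖(n : ℂ)‖ ≤ ‖w + (n : ℂ)‖ + ‖w‖ := by
      calc ‖(n : ℂ)‖ = ‖(w + (n : ℂ)) + (-w)‖ := by ring_nf
        _ ≤ ‖w + (n : ℂ)‖ + ‖-w‖ := norm_add_le _ _
        _ = ‖w + (n : ℂ)‖ + ‖w‖ := by rw [norm_neg]
    have hn : ‖(n : ℂ)‖ = (n : ℝ) := by
      simp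
    linarith
  -- step: shifting by k doesn't increase the inverse norm, once n is large
  have step : ∀ n : ℕ, ‖w‖ + 1 ≤ (n : ℝ) → ∀ k : ℕ,
      ‖(Complex.Gamma (w + ((n + k : ℕ) : ℂ)))⁻¹‖ ≤ ‖(Complex.Gamma (w + (n : ℂ)))⁻¹‖ := by
    intro n hn k
    have hz' : ∀ m : ℕ, (w + (n : ℂ)) + (m : ℂ) ≠ 0 := by
      intro m
      have := hzn (n + m)
      push_cast at this ⊢
      intro h; exact this (by linear_combination h)
    have hsplit : w + ((n + k : ℕ) : ℂ) = (w + (n : ℂ)) + (k : ℂ) := by push_cast; ring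
    rw [hsplit, aux_gamma_shift _ hz' k, mul_inv, norm_mul]
    have hprod : 1 ≤ ‖∏ j ∈ Finset.range k, ((w + (n : ℂ)) + (j : ℂ))‖ := by
      rw [norm_prod]
      calc (1:ℝ) = ∏ _j ∈ Finset.range k, 1 := by simp
        _ ≤ _ := Finset.prod_le_prod (fun _ _ => zero_le_one) fun j _ => ?_
      have h1 : ((n + j : ℕ) : ℝ) - ‖w‖ ≤ ‖w + ((n + j : ℕ) : ℂ)‖ := hnorm (n + j)
      have h2 : w + ((n + j : ℕ) : ℂ) = (w + (n : ℂ)) + (j : ℂ) := by push_cast; ring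
      rw [h2] at h1
      have : (n : ℝ) ≤ ((n + j : ℕ) : ℝ) := by push_cast; linarith [Nat.cast_nonneg (α := ℝ) j]
      linarith
    have hpos : (0 : ℝ) ≤ ‖(Complex.Gamma (w + (n : ℂ)))⁻¹‖ := norm_nonneg _
    calc ‖(∏ j ∈ Finset.range k, ((w + (n : ℂ)) + (j : ℂ)))⁻¹‖ * ‖(Complex.Gamma (w + (n : ℂ)))⁻¹‖
        ≤ 1 * ‖(Complex.Gamma (w + (n : ℂ)))⁻¹‖ := by
          refine mul_le_mul_of_nonneg_right ?_ hpos
          rw [norm_inv]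
          exact inv_le_one_of_one_le₀ hprod
      _ = _ := one_mul _
  set D : ℕ := ⌈‖w‖ + 1⌉₊ with hD
  have hDle : ‖w‖ + 1 ≤ ((r * D : ℕ) : ℝ) := by
    have h1 : ‖w‖ + 1 ≤ (D : ℝ) := Nat.le_ceil _
    have h2 : (D : ℝ) ≤ ((r * D : ℕ) : ℝ) := by
      push_cast
      nlinarith [Nat.cast_nonneg (α := ℝ) D, (Nat.one_le_cast (α := ℝ)).mpr hr]
    linarith
  refine ⟨∑ j ∈ Finset.range (D + 1), ‖(Complex.Gamma (w + ((r * j : ℕ) : ℂ)))⁻¹‖,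
    Finset.sum_nonneg fun _ _ => norm_nonneg _, fun d => ?_⟩
  rcases le_or_gt d D with hd | hd
  · exact Finset.single_le_sum (f := fun j => ‖(Complex.Gamma (w + ((r * j : ℕ) : ℂ)))⁻¹‖)
      (fun _ _ => norm_nonneg _) (Finset.mem_range.mpr (Nat.lt_succ_of_le hd))
  · obtain ⟨k, rfl⟩ : ∃ k, d = D + k := ⟨d - D, by omega⟩
    have h1 : r * (D + k) = r * D + r * k := by ring
    rw [h1]
    calc ‖(Complex.Gamma (w + ((r * D + r * k : ℕ) : ℂ)))⁻¹‖
        ≤ ‖(Complex.Gamma (w + ((r * D : ℕ) : ℂ)))⁻¹‖ := step (r * D) hDle (r * k)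
      _ ≤ _ := Finset.single_le_sum (f := fun j => ‖(Complex.Gamma (w + ((r * j : ℕ) : ℂ)))⁻¹‖)
          (fun _ _ => norm_nonneg _) (Finset.mem_range.mpr (by omega))

lemma aux_phiD_bound (r : ℕ) (hr : 1 ≤ r) (hbar : ℂ) (hh : hbar ≠ 0) (x : ℂ)
    (hx : ∀ s : ℝ, s ≤ 0 → x / hbar + 1 / 2 ≠ (s : ℂ)) :
    ∃ C K : ℝ, 0 ≤ C ∧ 0 ≤ K ∧ ∀ d : ℕ,
      ‖PhiD r hbar d x‖ ≤ C * K ^ d / (d.factorial : ℝ) := by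
  obtain ⟨M, hM0, hM⟩ := aux_invGamma_bound r hr (x / hbar + 1 / 2) hx
  set A : ℝ := ‖hbar ^ (-(x / hbar))‖ with hA
  set B : ℝ := ‖hbar ^ (-((r : ℂ) + 1))‖ with hB
  refine ⟨Real.sqrt (2 * Real.pi) * A * M, B, by positivity, norm_nonneg _, fun d => ?_⟩
  have hcpow : hbar ^ (-(x / hbar) - ((r : ℂ) + 1) * (d : ℂ))
      = hbar ^ (-(x / hbar)) * (hbar ^ (-((r : ℂ) + 1))) ^ d := by
    rw [show -(x / hbar) - ((r : ℂ) + 1) * (d : ℂ)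
        = -(x / hbar) + (d : ℂ) * (-((r : ℂ) + 1)) by ring,
      Complex.cpow_add _ _ hh, Complex.cpow_nat_mul]
  have harg : x / hbar + (r : ℂ) * (d : ℂ) + 1 / 2
      = (x / hbar + 1 / 2) + ((r * d : ℕ) : ℂ) := by push_cast; ring
  rw [PhiD, hcpow, harg]
  have hmid : ‖(-1 : ℂ) ^ d / ((r : ℂ) ^ d * (d.factorial : ℂ))‖
      = 1 / ((r : ℝ) ^ d * (d.factorial : ℝ)) := by
    rw [norm_div, norm_pow, norm_mul, norm_pow]
    simp
  rw [div_eq_mul_inv, norm_mul, norm_mul, norm_mul, hmid, norm_mul, norm_pow]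
  have hfac : (0 : ℝ) < (d.factorial : ℝ) := by positivity
  have hrd : (1 : ℝ) ≤ (r : ℝ) ^ d := one_le_pow₀ ((Nat.one_le_cast (α := ℝ)).mpr hr)
  have hsq : ‖((Real.sqrt (2 * Real.pi) : ℝ) : ℂ)‖ = Real.sqrt (2 * Real.pi) := by
    rw [Complex.norm_real, Real.norm_eq_abs, _root_.abs_of_nonneg (Real.sqrt_nonneg _)]
  rw [hsq] at *
  have hfrac : 1 / ((r : ℝ) ^ d * (d.factorial : ℝ)) ≤ 1 / (d.factorial : ℝ) := by
    rw [div_le_div_iff₀ (by positivity) hfac]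
    nlinarith
  calc Real.sqrt (2 * Real.pi) * (1 / ((r : ℝ) ^ d * (d.factorial : ℝ))) * (A * B ^ d) *
        ‖(Complex.Gamma ((x / hbar + 1 / 2) + ((r * d : ℕ) : ℂ)))⁻¹‖
      ≤ Real.sqrt (2 * Real.pi) * (1 / ((r : ℝ) ^ d * (d.factorial : ℝ))) * (A * B ^ d) * M := by
        refine mul_le_mul_of_nonneg_left (hM d) (by positivity)
    _ ≤ Real.sqrt (2 * Real.pi) * (1 / (d.factorial : ℝ)) * (A * B ^ d) * M := by
        refine mul_le_mul_of_nonneg_right (mul_le_mul_of_nonneg_right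
          (mul_le_mul_of_nonneg_left hfrac (Real.sqrt_nonneg _)) (by positivity)) hM0
    _ = Real.sqrt (2 * Real.pi) * A * M * B ^ d / (d.factorial : ℝ) := by ring

lemma aux_hasDerivAt_tsum (c : ℕ → ℂ) (C K : ℝ) (hC : 0 ≤ C) (hK : 0 ≤ K)
    (hc : ∀ d : ℕ, ‖c d‖ ≤ C * K ^ d / (d.factorial : ℝ)) (z : ℂ) :
    HasDerivAt (fun y : ℂ => ∑' d : ℕ, c d * y ^ d)
      (∑' d : ℕ, (d : ℂ) * c d * z ^ (d - 1)) z := by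
  set R : ℝ := ‖z‖ + 1 with hR
  have hR0 : 0 < R := by positivity
  set L : ℝ := 2 * (K * (1 + R)) with hL
  have hL0 : 0 ≤ L := by positivity
  refine hasDerivAt_tsum_of_isPreconnected
    (u := fun d => C * (L ^ d / (d.factorial : ℝ)))
    (t := Metric.ball (0 : ℂ) R)
    (g := fun d y => c d * y ^ d)
    (g' := fun d y => (d : ℂ) * c d * y ^ (d - 1))
    (y₀ := 0)
    ((Real.summable_pow_div_factorial L).mul_left C)
    Metric.isOpen_ball
    ((convex_ball (0 : ℂ) R).isPreconnected)
    (fun d y _ => by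
      simpa [mul_comm, mul_assoc, mul_left_comm] using (hasDerivAt_pow d y).const_mul (c d))
    (fun d y hy => ?_)
    (Metric.mem_ball_self hR0)
    (?_)
    (by simp [Metric.mem_ball, hR])
  · -- norm bound
    have hy' : ‖y‖ ≤ R := by
      have := Metric.mem_ball.mp hy
      rw [dist_zero_right] at this
      linarith
    have h1 : ‖(d : ℂ) * c d * y ^ (d - 1)‖ = (d : ℝ) * ‖c d‖ * ‖y‖ ^ (d - 1) := by
      rw [norm_mul, norm_mul, norm_pow]
      simp
    rw [h1]
    have h2 : ‖y‖ ^ (d - 1) ≤ R ^ (d - 1) := pow_le_pow_left₀ (norm_nonneg _) hy' _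
    have h3 : R ^ (d - 1) ≤ (1 + R) ^ d := by
      calc R ^ (d - 1) ≤ (1 + R) ^ (d - 1) := pow_le_pow_left₀ hR0.le (by linarith) _
        _ ≤ (1 + R) ^ d := pow_le_pow_right₀ (by linarith) (Nat.sub_le d 1)
    have h4 : (d : ℝ) ≤ 2 ^ d := by
      exact_mod_cast (Nat.lt_two_pow_self (n := d)).le
    calc (d : ℝ) * ‖c d‖ * ‖y‖ ^ (d - 1)
        ≤ (2 : ℝ) ^ d * (C * K ^ d / (d.factorial : ℝ)) * (1 + R) ^ d := by
          refine mul_le_mul (mul_le_mul h4 (hc d) (norm_nonneg _) (by positivity)) ?_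
            (by positivity) (by positivity)
          exact le_trans h2 h3
      _ = C * (L ^ d / (d.factorial : ℝ)) := by
          rw [hL, mul_pow, mul_pow]
          field_simp
  · -- summable at 0
    refine summable_of_ne_finset_zero (s := {0}) fun d hd => ?_
    have : d ≠ 0 := by simpa using hd
    simp [zero_pow this]

/-- The wave function `Φ(t,q) = Σ_{d≥0} q^{rd} e^{tħrd} Φ^d(x)` (as a function of real `t`, `q`)
is differentiable in `t` and in `q`, and satisfies the `t`-evolution equation
`∂Φ/∂t = ħ · q · ∂Φ/∂q`. -/
theorem wave_function_t_evolution (r : ℕ) (hr : 1 ≤ r) (hbar : ℂ) (hh : hbar ≠ 0) (x : ℂ)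
    (hx : ∀ s : ℝ, s ≤ 0 → x / hbar + 1 / 2 ≠ (s : ℂ)) :
    ∃ Ft Fq : ℝ → ℝ → ℂ,
      (∀ t q : ℝ, HasDerivAt
        (fun t' : ℝ => ∑' d : ℕ,
          (q : ℂ) ^ (r * d) * Complex.exp ((t' : ℂ) * hbar * (r : ℂ) * (d : ℂ)) * PhiD r hbar d x)
        (Ft t q) t) ∧
      (∀ t q : ℝ, HasDerivAt
        (fun q' : ℝ => ∑' d : ℕ,
          (q' : ℂ) ^ (r * d) * Complex.exp ((t : ℂ) * hbar * (r : ℂ) * (d : ℂ)) * PhiD r hbar d x)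
        (Fq t q) q) ∧
      (∀ t q : ℝ, Ft t q = hbar * (q : ℂ) * Fq t q) := by
  obtain ⟨C, K, hC, hK, hc⟩ := aux_phiD_bound r hr hbar hh x hx
  have hGdiff : ∀ y : ℂ, HasDerivAt (fun y : ℂ => ∑' d : ℕ, PhiD r hbar d x * y ^ d)
      (∑' d : ℕ, (d : ℂ) * PhiD r hbar d x * y ^ (d - 1)) y :=
    fun y => aux_hasDerivAt_tsum _ C K hC hK hc y
  have key : ∀ a b : ℝ,
      (∑' d : ℕ, (b : ℂ) ^ (r * d) * Complex.exp ((a : ℂ) * hbar * (r : ℂ) * (d : ℂ))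
        * PhiD r hbar d x)
      = ∑' d : ℕ, PhiD r hbar d x
        * ((b : ℂ) ^ r * Complex.exp ((a : ℂ) * hbar * (r : ℂ))) ^ d := by
    intro a b
    refine tsum_congr fun d => ?_
    have h1 : ((b : ℂ) ^ r * Complex.exp ((a : ℂ) * hbar * (r : ℂ))) ^ d
        = (b : ℂ) ^ (r * d) * Complex.exp ((a : ℂ) * hbar * (r : ℂ) * (d : ℂ)) := by
      rw [mul_pow, ← pow_mul, ← Complex.exp_nat_mul,
        show (d : ℂ) * ((a : ℂ) * hbar * (r : ℂ)) = (a : ℂ) * hbar * (r : ℂ) * (d : ℂ) by ring]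
    rw [h1]; ring
  refine ⟨fun t q => (∑' d : ℕ, (d : ℂ) * PhiD r hbar d x
        * ((q : ℂ) ^ r * Complex.exp ((t : ℂ) * hbar * (r : ℂ))) ^ (d - 1))
        * ((q : ℂ) ^ r * (Complex.exp ((t : ℂ) * hbar * (r : ℂ)) * (hbar * (r : ℂ)))),
    fun t q => (∑' d : ℕ, (d : ℂ) * PhiD r hbar d x
        * ((q : ℂ) ^ r * Complex.exp ((t : ℂ) * hbar * (r : ℂ))) ^ (d - 1))
        * ((r : ℂ) * (q : ℂ) ^ (r - 1) * Complex.exp ((t : ℂ) * hbar * (r : ℂ))),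
    ?_, ?_, ?_⟩
  · intro t q
    have heq : (fun t' : ℝ => ∑' d : ℕ,
        (q : ℂ) ^ (r * d) * Complex.exp ((t' : ℂ) * hbar * (r : ℂ) * (d : ℂ)) * PhiD r hbar d x)
        = fun t' : ℝ => ∑' d : ℕ, PhiD r hbar d x
          * ((q : ℂ) ^ r * Complex.exp ((t' : ℂ) * hbar * (r : ℂ))) ^ d :=
      funext fun t' => key t' q
    rw [heq]
    have hlin : HasDerivAt (fun s : ℂ => s * hbar * (r : ℂ)) (hbar * (r : ℂ)) (t : ℂ) := by
      simpa using ((hasDerivAt_id ((t : ℂ))).mul_const hbar).mul_const ((r : ℂ))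
    have hexp : HasDerivAt (fun s : ℂ => Complex.exp (s * hbar * (r : ℂ)))
        (Complex.exp ((t : ℂ) * hbar * (r : ℂ)) * (hbar * (r : ℂ))) (t : ℂ) :=
      (Complex.hasDerivAt_exp _).comp _ hlin
    have h1 : HasDerivAt (fun s : ℂ => (q : ℂ) ^ r * Complex.exp (s * hbar * (r : ℂ)))
        ((q : ℂ) ^ r * (Complex.exp ((t : ℂ) * hbar * (r : ℂ)) * (hbar * (r : ℂ)))) (t : ℂ) :=
      hexp.const_mul _
    have h2 := (hGdiff ((q : ℂ) ^ r * Complex.exp ((t : ℂ) * hbar * (r : ℂ)))).comp (t : ℂ) h1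
    have h3 := h2.comp_ofReal
    exact h3
  · intro t q
    have heq : (fun q' : ℝ => ∑' d : ℕ,
        (q' : ℂ) ^ (r * d) * Complex.exp ((t : ℂ) * hbar * (r : ℂ) * (d : ℂ)) * PhiD r hbar d x)
        = fun q' : ℝ => ∑' d : ℕ, PhiD r hbar d x
          * ((q' : ℂ) ^ r * Complex.exp ((t : ℂ) * hbar * (r : ℂ))) ^ d :=
      funext fun q' => key t q'
    rw [heq]
    have h1 : HasDerivAt (fun s : ℂ => s ^ r * Complex.exp ((t : ℂ) * hbar * (r : ℂ)))
        ((r : ℂ) * (q : ℂ) ^ (r - 1) * Complex.exp ((t : ℂ) * hbar * (r : ℂ))) (q : ℂ) :=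
      (hasDerivAt_pow r ((q : ℂ))).mul_const _
    have h2 := (hGdiff ((q : ℂ) ^ r * Complex.exp ((t : ℂ) * hbar * (r : ℂ)))).comp (q : ℂ) h1
    have h3 := h2.comp_ofReal
    exact h3
  · intro t q
    have hq : ((q : ℂ)) ^ r = (q : ℂ) ^ (r - 1) * (q : ℂ) := by
      conv_lhs => rw [show r = (r - 1) + 1 by omega]
      rw [pow_succ]
    beta_reduce
    rw [hq]; ring
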